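/- Let C ⊆ ℝ_max^n be a max-plus polyhedron with representation C = co(Z) ⊕ cone(Y), where Z, Y are finite subsets of ℝ_max^n. Then every extreme point of C belongs to Z, and every extreme vector of the recession cone of C has a non-zero scalar multiple belonging to Y. -/

import Mathlib

noncomputable section

/-- The max-plus (tropical) semiring `ℝ ∪ {-∞}`:
addition is `max`, multiplication is `+` (with `-∞` absorbing). -/
abbrev Rmax : Type := WithBot ℝ

/-- A max-plus (tropical) cone: a set stable under max-plus linear combinations. -/
def IsTropCone {ι : Type} (V : Set (ι → Rmax)) : Prop :=
  ∀ u ∈ V, ∀ w ∈ V, ∀ lam mu : Rmax, (fun i => max (lam + u i) (mu + w i)) ∈ V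

/-- `tropCone X`: the set of all max-plus linear combinations of finitely many
elements of `X`. -/
def tropCone {ι : Type} (X : Set (ι → Rmax)) : Set (ι → Rmax) :=
  {x | ∃ (m : ℕ) (lam : Fin m → Rmax) (w : Fin m → ι → Rmax),
        (∀ s, w s ∈ X) ∧ x = fun i => Finset.univ.sup (fun s => lam s + w s i)}

/-- `tropCo X`: max-plus convex combinations (coefficients with maximum `0 = 𝟙`)
of finitely many elements of `X`. -/
def tropCo {ι : Type} (X : Set (ι → Rmax)) : Set (ι → Rmax) :=
  {x | ∃ (m : ℕ) (lam : Fin m → Rmax) (w : Fin m → ι → Rmax),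
        (∀ s, w s ∈ X) ∧ Finset.univ.sup lam = (0 : Rmax) ∧
        x = fun i => Finset.univ.sup (fun s => lam s + w s i)}

/-- Max-plus Minkowski sum of two subsets. -/
def tropSum {ι : Type} (A B : Set (ι → Rmax)) : Set (ι → Rmax) :=
  {z | ∃ a ∈ A, ∃ b ∈ B, z = fun i => max (a i) (b i)}

/-- A half-space of `ℝ_max^ι`. -/
def IsHalfSpace {ι : Type} [Fintype ι] (H : Set (ι → Rmax)) : Prop :=
  ∃ a b : ι → Rmax,
    H = {x | Finset.univ.sup (fun i => a i + x i) ≤ Finset.univ.sup (fun j => b j + x j)}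

/-- An affine half-space of `ℝ_max^ι`. -/
def IsAffineHalfSpace {ι : Type} [Fintype ι] (H : Set (ι → Rmax)) : Prop :=
  ∃ (a b : ι → Rmax) (c d : Rmax),
    H = {x | max (Finset.univ.sup (fun i => a i + x i)) c ≤
             max (Finset.univ.sup (fun j => b j + x j)) d}

/-- A max-plus polyhedron: an intersection of finitely many affine half-spaces. -/
def IsPolyhedron {ι : Type} [Fintype ι] (C : Set (ι → Rmax)) : Prop :=
  ∃ (m : ℕ) (H : Fin m → Set (ι → Rmax)),
    (∀ k, IsAffineHalfSpace (H k)) ∧ C = ⋂ k, H k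

/-- The recession cone of a max-plus convex set. -/
def recessionCone {ι : Type} (C : Set (ι → Rmax)) : Set (ι → Rmax) :=
  {u | ∃ x ∈ C, ∀ lam : Rmax, (fun i => max (x i) (lam + u i)) ∈ C}

/-- A half-space minimal (for inclusion) among the half-spaces containing `V`. -/
def IsMinimalHalfSpace {ι : Type} [Fintype ι] (V H : Set (ι → Rmax)) : Prop :=
  IsHalfSpace H ∧ V ⊆ H ∧ ¬ ∃ H', IsHalfSpace H' ∧ V ⊆ H' ∧ H' ⊂ H

/-- The half-space written in normal form: `max_{i ∈ I} (a i + x i) ≤ max_{j ∈ J} (a j + x j)`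
(the sup over an empty index set being `⊥ = -∞`). -/
def halfSpace {ι : Type} (I J : Finset ι) (a : ι → ℝ) : Set (ι → Rmax) :=
  {x | I.sup (fun i => ((a i : Rmax)) + x i) ≤ J.sup (fun j => ((a j : Rmax)) + x j)}

/-- The max-plus cone generated by the vectors `v 0, …, v (p-1)` (finite entries). -/
def genCone {ι : Type} [Fintype ι] {p : ℕ} (v : Fin p → ι → ℝ) : Set (ι → Rmax) :=
  {x | ∃ lam : Fin p → Rmax, x = fun i => Finset.univ.sup (fun r => lam r + ((v r i : Rmax)))}

/-- `S_j(x)`: the `j`-th component of the type of `x` relative to the generators `v`. -/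
def typeSet {ι : Type} {p : ℕ} (v : Fin p → ι → ℝ) (x : ι → ℝ) (j : ι) : Set (Fin p) :=
  {r | v r j - x j = ⨆ k, (v r k - x k)}

/-- `V` has full support. -/
def HasFullSupport {ι : Type} (V : Set (ι → Rmax)) : Prop :=
  ∀ k : ι, ∃ v ∈ V, v k ≠ ⊥

/-- `x` is a vertex of the natural cell decomposition induced by the generators `v`:
the cell of `type(x)` consists exactly of the (finite) scalar multiples of `x`. -/
def IsVertex {ι : Type} {p : ℕ} (v : Fin p → ι → ℝ) (x : ι → ℝ) : Prop :=
  {y : ι → ℝ | ∀ j, typeSet v x j ⊆ typeSet v y j} = {y | ∃ c : ℝ, y = fun i => c + x i}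

/-- The `i`-th max-plus unit vector. -/
def unitVec {ι : Type} [DecidableEq ι] (i : ι) : ι → Rmax :=
  fun k => if k = i then (0 : Rmax) else ⊥

/-- The vector `⊕_{j ∈ J} b j ⊙ e^j`. -/
def jVec {ι : Type} [DecidableEq ι] (J : Finset ι) (b : ι → ℝ) : ι → Rmax :=
  fun k => if k ∈ J then ((b k : Rmax)) else ⊥

/-- The polar of a max-plus cone: the set of (pairs defining) half-spaces containing it. -/
def polar {ι : Type} [Fintype ι] (V : Set (ι → Rmax)) : Set ((ι → Rmax) × (ι → Rmax)) :=
  {q | ∀ x ∈ V, Finset.univ.sup (fun i => q.1 i + x i) ≤ Finset.univ.sup (fun j => q.2 j + x j)}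

/-- Extreme vector of a max-plus cone of pairs (e.g. the polar). -/
def IsExtremePair {ι : Type} (W : Set ((ι → Rmax) × (ι → Rmax)))
    (z : (ι → Rmax) × (ι → Rmax)) : Prop :=
  z ∈ W ∧ z ≠ (fun _ => (⊥ : Rmax), fun _ => (⊥ : Rmax)) ∧
    ∀ u ∈ W, ∀ w ∈ W,
      z = (fun i => max (u.1 i) (w.1 i), fun i => max (u.2 i) (w.2 i)) → z = u ∨ z = w

/-- Extreme point of a max-plus convex set. -/
def IsExtremePoint {ι : Type} (C : Set (ι → Rmax)) (z : ι → Rmax) : Prop :=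
  z ∈ C ∧ ∀ u ∈ C, ∀ w ∈ C, ∀ lam mu : Rmax, max lam mu = (0 : Rmax) →
    z = (fun i => max (lam + u i) (mu + w i)) → z = u ∨ z = w

/-- Extreme vector of a max-plus cone. -/
def IsExtremeVector {ι : Type} (W : Set (ι → Rmax)) (z : ι → Rmax) : Prop :=
  z ∈ W ∧ z ≠ (fun _ => (⊥ : Rmax)) ∧
    ∀ u ∈ W, ∀ w ∈ W, z = (fun i => max (u i) (w i)) → z = u ∨ z = w

/-- Projection of a subset of `ℝ_max^ι` onto the coordinates indexed by `K`. -/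
def projCone {ι : Type} (K : Finset ι) (V : Set (ι → Rmax)) :
    Set ({k : ι // k ∈ K} → Rmax) :=
  {y | ∃ x ∈ V, y = fun k => x k.1}

lemma Rmax.add_max (c x y : Rmax) : c + max x y = max (c + x) (c + y) :=
  (max_add_add_left c x y).symm

lemma Rmax.add_finsetSup {σ : Type*} (S : Finset σ) (f : σ → Rmax) (c : Rmax) :
    c + S.sup f = S.sup fun s => c + f s := by
  induction S using Finset.cons_induction with
  | empty => simp
  | cons a S h ih => simp [Finset.sup_cons, Rmax.add_max, ih]

lemma Rmax.sup_reindex {σ : Type*} (S : Finset σ) (g : σ → Rmax) :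
    (Finset.univ.sup fun r : Fin S.card => g (S.equivFin.symm r).1) = S.sup g := by
  apply le_antisymm
  · exact Finset.sup_le fun r _ => Finset.le_sup (S.equivFin.symm r).2
  · refine Finset.sup_le fun s hs => ?_
    have := Finset.le_sup (f := fun r : Fin S.card => g (S.equivFin.symm r).1)
      (Finset.mem_univ (S.equivFin ⟨s, hs⟩))
    simpa using this

lemma Rmax.sup_sum {m1 m2 : ℕ} (f : Fin m1 → Rmax) (g : Fin m2 → Rmax) :
    (Finset.univ.sup (Sum.elim f g) : Rmax) = max (Finset.univ.sup f) (Finset.univ.sup g) := by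
  apply le_antisymm
  · refine Finset.sup_le ?_
    rintro (s|s) _
    · exact le_max_of_le_left (Finset.le_sup (Finset.mem_univ s))
    · exact le_max_of_le_right (Finset.le_sup (Finset.mem_univ s))
  · exact max_le (Finset.sup_le fun s _ => Finset.le_sup (f := Sum.elim f g) (Finset.mem_univ (Sum.inl s)))
      (Finset.sup_le fun s _ => Finset.le_sup (f := Sum.elim f g) (Finset.mem_univ (Sum.inr s)))

-- membership lemmas
lemma mem_tropCone_finset {σ : Type*} {n : Type} {X : Set (n → Rmax)}
    (S : Finset σ) (lam : σ → Rmax) (w : σ → n → Rmax)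
    (hw : ∀ s ∈ S, w s ∈ X) :
    (fun i => S.sup fun s => lam s + w s i) ∈ tropCone X := by
  refine ⟨S.card, fun r => lam (S.equivFin.symm r).1, fun r => w (S.equivFin.symm r).1,
    fun r => hw _ (S.equivFin.symm r).2, ?_⟩
  funext i
  exact (Rmax.sup_reindex S (fun s => lam s + w s i)).symm

lemma mem_tropCo_finset {σ : Type*} {n : Type} {X : Set (n → Rmax)}
    (S : Finset σ) (lam : σ → Rmax) (w : σ → n → Rmax)
    (hw : ∀ s ∈ S, w s ∈ X) (hlam : S.sup lam = 0) :
    (fun i => S.sup fun s => lam s + w s i) ∈ tropCo X := by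
  refine ⟨S.card, fun r => lam (S.equivFin.symm r).1, fun r => w (S.equivFin.symm r).1,
    fun r => hw _ (S.equivFin.symm r).2, by rw [Rmax.sup_reindex S lam]; exact hlam, ?_⟩
  funext i
  exact (Rmax.sup_reindex S (fun s => lam s + w s i)).symm

lemma bot_mem_tropCone {n : Type} (X : Set (n → Rmax)) :
    (fun _ : n => (⊥ : Rmax)) ∈ tropCone X :=
  ⟨0, Fin.elim0, Fin.elim0, fun s => s.elim0, by funext i; simp⟩

lemma single_mem_tropCone {n : Type} {X : Set (n → Rmax)} {y : n → Rmax} (hy : y ∈ X)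
    (c : Rmax) : (fun k => c + y k) ∈ tropCone X := by
  have := mem_tropCone_finset ({0} : Finset (Fin 1)) (fun _ => c) (fun _ => y)
    (fun _ _ => hy)
  simpa using this

lemma single_mem_tropCo {n : Type} {X : Set (n → Rmax)} {y : n → Rmax} (hy : y ∈ X) :
    y ∈ tropCo X := by
  have := mem_tropCo_finset ({0} : Finset (Fin 1)) (fun _ => (0 : Rmax)) (fun _ => y)
    (fun _ _ => hy) (by simp)
  simpa using this

lemma tropCone_max_mem {n : Type} {X : Set (n → Rmax)} {x y : n → Rmax}
    (hx : x ∈ tropCone X) (hy : y ∈ tropCone X) :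
    (fun i => max (x i) (y i)) ∈ tropCone X := by
  obtain ⟨m1, lam1, w1, hw1, rfl⟩ := hx
  obtain ⟨m2, lam2, w2, hw2, rfl⟩ := hy
  have := mem_tropCone_finset (Finset.univ : Finset (Fin m1 ⊕ Fin m2))
    (Sum.elim lam1 lam2) (Sum.elim w1 w2) (by rintro (s|s) _ <;> [exact hw1 s; exact hw2 s])
  convert this using 2 with i
  exact (Rmax.sup_sum (fun s => lam1 s + w1 s i) (fun s => lam2 s + w2 s i)).symm.trans
    (by apply Finset.sup_congr rfl; rintro (s|s) _ <;> rfl)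

lemma tropCone_smul_mem {n : Type} {X : Set (n → Rmax)} {x : n → Rmax}
    (hx : x ∈ tropCone X) (c : Rmax) : (fun i => c + x i) ∈ tropCone X := by
  obtain ⟨m, lam, w, hw, rfl⟩ := hx
  refine ⟨m, fun s => c + lam s, w, hw, ?_⟩
  funext i
  rw [Rmax.add_finsetSup]
  exact Finset.sup_congr rfl fun s _ => (add_assoc c (lam s) (w s i)).symm

lemma tropCo_max_mem {n : Type} {X : Set (n → Rmax)} {x y : n → Rmax}
    (hx : x ∈ tropCo X) (hy : y ∈ tropCo X) :
    (fun i => max (x i) (y i)) ∈ tropCo X := by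
  obtain ⟨m1, lam1, w1, hw1, hl1, rfl⟩ := hx
  obtain ⟨m2, lam2, w2, hw2, hl2, rfl⟩ := hy
  have := mem_tropCo_finset (Finset.univ : Finset (Fin m1 ⊕ Fin m2))
    (Sum.elim lam1 lam2) (Sum.elim w1 w2) (by rintro (s|s) _ <;> [exact hw1 s; exact hw2 s])
    (by rw [Rmax.sup_sum lam1 lam2, hl1, hl2]; simp)
  convert this using 2 with i
  exact (Rmax.sup_sum (fun s => lam1 s + w1 s i) (fun s => lam2 s + w2 s i)).symm.trans
    (by apply Finset.sup_congr rfl; rintro (s|s) _ <;> rfl)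

-- generic: sup over a nonempty finset of elements of a max-closed set
lemma sup_mem_of_maxClosed {σ : Type*} {n : Type} {D : Set (n → Rmax)}
    (hD : ∀ u ∈ D, ∀ w ∈ D, (fun i => max (u i) (w i)) ∈ D)
    (S : Finset σ) (hS : S.Nonempty) (v : σ → n → Rmax) (hv : ∀ s ∈ S, v s ∈ D) :
    (fun i => S.sup fun s => v s i) ∈ D := by
  induction S using Finset.cons_induction with
  | empty => exact absurd hS (by simp)
  | cons a S h ih =>
    rcases S.eq_empty_or_nonempty with rfl | hS'
    · simpa using hv a (Finset.mem_cons_self a _)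
    · have hmem := hD (v a) (hv a (Finset.mem_cons_self a _))
        (fun i => S.sup fun s => v s i) (ih hS' fun s hs => hv s (Finset.mem_cons_of_mem hs))
      simpa [Finset.sup_cons] using hmem

lemma extreme_sup_point {σ : Type*} {n : Type} {C : Set (n → Rmax)}
    (hCmax : ∀ u ∈ C, ∀ w ∈ C, (fun i => max (u i) (w i)) ∈ C)
    {z : n → Rmax}
    (hz : z ∈ C ∧ ∀ u ∈ C, ∀ w ∈ C, ∀ lam mu : Rmax, max lam mu = (0 : Rmax) →
      z = (fun i => max (lam + u i) (mu + w i)) → z = u ∨ z = w)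
    (S : Finset σ) (hS : S.Nonempty) (v : σ → n → Rmax) (hv : ∀ s ∈ S, v s ∈ C)
    (heq : z = fun i => S.sup fun s => v s i) : ∃ s ∈ S, z = v s := by
  induction S using Finset.cons_induction with
  | empty => exact absurd hS (by simp)
  | cons a S h ih =>
    rcases S.eq_empty_or_nonempty with rfl | hS'
    · exact ⟨a, Finset.mem_cons_self a _, by funext i; rw [heq]; simp⟩
    · have hWS : (fun i => S.sup fun s => v s i) ∈ C :=
        sup_mem_of_maxClosed hCmax S hS' v fun s hs => hv s (Finset.mem_cons_of_mem hs)
      have := hz.2 (v a) (hv a (Finset.mem_cons_self a _)) _ hWS 0 0 (by simp)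
        (by funext i; rw [heq]; simp [Finset.sup_cons])
      rcases this with h1 | h2
      · exact ⟨a, Finset.mem_cons_self a _, h1⟩
      · obtain ⟨s, hs, hzs⟩ := ih hS' (fun s hs => hv s (Finset.mem_cons_of_mem hs)) h2
        exact ⟨s, Finset.mem_cons_of_mem hs, hzs⟩

lemma extreme_sup_vector {σ : Type*} {n : Type} {W : Set (n → Rmax)}
    (hWmax : ∀ u ∈ W, ∀ w ∈ W, (fun i => max (u i) (w i)) ∈ W)
    {z : n → Rmax}
    (hz : ∀ u ∈ W, ∀ w ∈ W, z = (fun i => max (u i) (w i)) → z = u ∨ z = w)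
    (S : Finset σ) (hS : S.Nonempty) (v : σ → n → Rmax) (hv : ∀ s ∈ S, v s ∈ W)
    (heq : z = fun i => S.sup fun s => v s i) : ∃ s ∈ S, z = v s := by
  induction S using Finset.cons_induction with
  | empty => exact absurd hS (by simp)
  | cons a S h ih =>
    rcases S.eq_empty_or_nonempty with rfl | hS'
    · exact ⟨a, Finset.mem_cons_self a _, by funext i; rw [heq]; simp⟩
    · have hWS : (fun i => S.sup fun s => v s i) ∈ W :=
        sup_mem_of_maxClosed hWmax S hS' v fun s hs => hv s (Finset.mem_cons_of_mem hs)
      have := hz (v a) (hv a (Finset.mem_cons_self a _)) _ hWS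
        (by funext i; rw [heq]; simp [Finset.sup_cons])
      rcases this with h1 | h2
      · exact ⟨a, Finset.mem_cons_self a _, h1⟩
      · obtain ⟨s, hs, hzs⟩ := ih hS' (fun s hs => hv s (Finset.mem_cons_of_mem hs)) h2
        exact ⟨s, Finset.mem_cons_of_mem hs, hzs⟩

-- absorption: c ≤ 0 → max p (max (c + p) q) = max p q
lemma max_absorb (p q c : Rmax) (hc : c ≤ 0) : max p (max (c + p) q) = max p q := by
  have h : c + p ≤ p := by
    calc c + p ≤ 0 + p := add_le_add_left hc p
    _ = p := zero_add p
  rcases le_total (c + p) q with h'|h'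
  · rw [max_eq_right h']
  · rw [max_eq_left h', max_eq_left h, max_eq_left (h'.trans h)]

-- strict growth: max p q = max p (e + q) with e > 0 real forces q ≤ p
lemma le_of_max_eq_max_shift (p q : Rmax) (e : ℝ) (he : 0 < e)
    (h : max p q = max p ((e : Rmax) + q)) : q ≤ p := by
  by_contra hqp
  push_neg at hqp
  have hqbot : q ≠ ⊥ := fun h0 => by rw [h0] at hqp; exact not_lt_bot hqp
  lift q to ℝ using hqbot
  have hq : (e : Rmax) + (q : Rmax) = ((e + q : ℝ) : Rmax) := by
    exact_mod_cast rfl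
  have hlt : ((q : ℝ) : Rmax) < ((e + q : ℝ) : Rmax) := by
    exact_mod_cast (by linarith : q < e + q)
  have h1 : max p ((q:ℝ) : Rmax) = ((q:ℝ) : Rmax) := max_eq_right hqp.le
  have h2 : max p ((e : Rmax) + (q : Rmax)) = ((e + q : ℝ) : Rmax) := by
    rw [hq]; exact max_eq_right (hqp.trans hlt).le
  rw [h1, h2] at h
  exact absurd h (ne_of_lt hlt)

section Rep
variable {n : ℕ} {C Z Y : Set (Fin n → Rmax)}
  (hrep : C = tropSum (tropCo Z) (tropCone Y))

include hrep

lemma tropCo_subset_C : tropCo Z ⊆ C := by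
  intro a ha
  rw [hrep]
  exact ⟨a, ha, _, bot_mem_tropCone Y, by funext i; simp⟩

lemma C_max_mem : ∀ u ∈ C, ∀ w ∈ C, (fun i => max (u i) (w i)) ∈ C := by
  intro u hu w hw
  rw [hrep] at hu hw ⊢
  obtain ⟨a1, ha1, b1, hb1, rfl⟩ := hu
  obtain ⟨a2, ha2, b2, hb2, rfl⟩ := hw
  refine ⟨_, tropCo_max_mem ha1 ha2, _, tropCone_max_mem hb1 hb2, ?_⟩
  funext i
  exact max_max_max_comm (a1 i) (b1 i) (a2 i) (b2 i)

lemma tropCone_subset_recession {x : Fin n → Rmax} (hx : x ∈ C) :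
    tropCone Y ⊆ recessionCone C := by
  intro b hb
  refine ⟨x, hx, fun lam => ?_⟩
  rw [hrep] at hx ⊢
  obtain ⟨a, ha, c, hc, rfl⟩ := hx
  refine ⟨a, ha, fun i => max (c i) (lam + b i),
    tropCone_max_mem hc (tropCone_smul_mem hb lam), ?_⟩
  funext i
  exact max_assoc _ _ _

lemma recession_max_mem :
    ∀ u ∈ recessionCone C, ∀ w ∈ recessionCone C,
      (fun i => max (u i) (w i)) ∈ recessionCone C := by
  intro u hu w hw
  obtain ⟨x1, hx1, h1⟩ := hu
  obtain ⟨x2, hx2, h2⟩ := hw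
  refine ⟨fun i => max (x1 i) (x2 i), C_max_mem hrep x1 hx1 x2 hx2, fun lam => ?_⟩
  have hmem := C_max_mem hrep _ (h1 lam) _ (h2 lam)
  have heq : (fun i => max ((fun i => max (x1 i) (lam + u i)) i)
      ((fun i => max (x2 i) (lam + w i)) i))
      = fun i => max (max (x1 i) (x2 i)) (lam + max (u i) (w i)) := by
    funext i
    simp only [Rmax.add_max]
    exact max_max_max_comm (x1 i) (lam + u i) (x2 i) (lam + w i)
  rw [heq] at hmem
  exact hmem

end Rep

-- key reduction lemma for extreme points
lemma key1 {n : ℕ} {C Z Y : Set (Fin n → Rmax)}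
    (hrep : C = tropSum (tropCo Z) (tropCone Y))
    {z a b : Fin n → Rmax}
    (hz : z ∈ C ∧ ∀ u ∈ C, ∀ w ∈ C, ∀ lam mu : Rmax, max lam mu = (0 : Rmax) →
      z = (fun i => max (lam + u i) (mu + w i)) → z = u ∨ z = w)
    (e : ℝ) (he : 0 < e) (ha : a ∈ C)
    (hw : (fun i => max (a i) (((e : ℝ) : Rmax) + b i)) ∈ C)
    (hzab : z = fun i => max (a i) (b i)) : z = a := by
  have hneg : ((-e : ℝ) : Rmax) ≤ 0 := by
    rw [show (0 : Rmax) = ((0 : ℝ) : Rmax) from rfl]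
    exact_mod_cast neg_nonpos.mpr he.le
  have hmax : max (0 : Rmax) ((-e : ℝ) : Rmax) = 0 := max_eq_left hneg
  have hee : ((-e : ℝ) : Rmax) + ((e : ℝ) : Rmax) = 0 := by
    rw [show (0 : Rmax) = ((0 : ℝ) : Rmax) from rfl]
    exact_mod_cast (by ring : -e + e = 0)
  have heqn : z = fun i => max ((0 : Rmax) + a i)
      (((-e : ℝ) : Rmax) + (fun i => max (a i) (((e : ℝ) : Rmax) + b i)) i) := by
    funext i
    rw [hzab]
    simp only [zero_add, Rmax.add_max, ← add_assoc, hee]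
    exact (max_absorb (a i) (b i) ((-e : ℝ) : Rmax) hneg).symm
  rcases hz.2 a ha _ hw 0 ((-e : ℝ) : Rmax) hmax heqn with h | h
  · exact h
  · have hba : ∀ i, b i ≤ a i := by
      intro i
      apply le_of_max_eq_max_shift (a i) (b i) e he
      exact (congrFun hzab i).symm.trans (congrFun h i)
    rw [hzab]
    funext i
    exact max_eq_left (hba i)

-- Part 1
lemma part1 {n : ℕ} {C Z Y : Set (Fin n → Rmax)}
    (hrep : C = tropSum (tropCo Z) (tropCone Y))
    {z : Fin n → Rmax}
    (hz : z ∈ C ∧ ∀ u ∈ C, ∀ w ∈ C, ∀ lam mu : Rmax, max lam mu = (0 : Rmax) →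
      z = (fun i => max (lam + u i) (mu + w i)) → z = u ∨ z = w) : z ∈ Z := by
  classical
  have hzC := hz.1
  rw [hrep] at hzC
  obtain ⟨a, ha, b, hb, hzab⟩ := hzC
  have hw1 : (fun i => max (a i) (((1 : ℝ) : Rmax) + b i)) ∈ C := by
    rw [hrep]
    exact ⟨a, ha, _, tropCone_smul_mem hb _, rfl⟩
  have hza : z = a := key1 hrep hz 1 one_pos (tropCo_subset_C hrep ha) hw1 hzab
  have hzco : z ∈ tropCo Z := hza ▸ ha
  obtain ⟨m, lam, v, hv, hlam, hzeq⟩ := hzco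
  set T : Finset (Fin m) := Finset.univ.filter (fun s => lam s = 0) with hT
  set Tc : Finset (Fin m) := Finset.univ.filter (fun s => ¬ lam s = 0) with hTc
  have hm : (Finset.univ : Finset (Fin m)).Nonempty := by
    by_contra hne
    rw [Finset.not_nonempty_iff_eq_empty] at hne
    rw [hne] at hlam
    simp at hlam
  obtain ⟨s0, _, hs0⟩ := Finset.exists_mem_eq_sup Finset.univ hm lam
  have hlam0 : lam s0 = 0 := by rw [← hs0]; exact hlam
  have hTne : T.Nonempty := ⟨s0, by simp [hT, hlam0]⟩
  have hunion : T ∪ Tc = Finset.univ := Finset.filter_union_filter_not_eq _ _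
  set a' : Fin n → Rmax := fun i => T.sup (fun s => v s i) with ha'
  set b' : Fin n → Rmax := fun i => Tc.sup (fun s => lam s + v s i) with hb'
  have hzab' : z = fun i => max (a' i) (b' i) := by
    funext i
    rw [hzeq]
    show Finset.univ.sup (fun s => lam s + v s i) = _
    rw [← hunion, Finset.sup_union]
    congr 1
    apply Finset.sup_congr rfl
    intro s hs
    rw [(Finset.mem_filter.mp hs).2, zero_add]
  have hlam_le : ∀ s, lam s ≤ 0 := fun s => hlam ▸ Finset.le_sup (Finset.mem_univ s)
  obtain ⟨e, he, hgap⟩ : ∃ e : ℝ, 0 < e ∧ ∀ s ∈ Tc, lam s ≤ ((-e : ℝ) : Rmax) := by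
    rcases hdel : Tc.sup lam with _ | d
    · exact ⟨1, one_pos, fun s hs => le_trans (Finset.le_sup hs) (by rw [hdel]; exact bot_le)⟩
    · have hd : d < 0 := by
        have hTcne : Tc.Nonempty := by
          by_contra hne
          rw [Finset.not_nonempty_iff_eq_empty] at hne
          rw [hne] at hdel
          simp at hdel
        obtain ⟨s1, hs1, hsup1⟩ := Finset.exists_mem_eq_sup Tc hTcne lam
        have h1 : lam s1 = (d : ℝ) := by rw [← hsup1]; exact hdel
        have h2 := hlam_le s1
        have h3 : ¬ lam s1 = 0 := (Finset.mem_filter.mp hs1).2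
        rw [h1] at h2 h3
        have hd0 : (d : ℝ) ≤ 0 := by
          rw [show (0 : Rmax) = ((0 : ℝ) : Rmax) from rfl] at h2
          exact_mod_cast h2
        rcases hd0.lt_or_eq with h | h
        · exact h
        · exact absurd (by rw [h]; rfl) h3
      refine ⟨-d, by linarith, fun s hs => ?_⟩
      have hle := Finset.le_sup (f := lam) hs
      rw [hdel] at hle
      simpa [neg_neg] using (show lam s ≤ ((d : ℝ) : Rmax) from hle)
  have ha'co : a' ∈ tropCo Z := by
    have hmem := mem_tropCo_finset T (fun _ => (0 : Rmax)) v (fun s _ => hv s)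
      (Finset.sup_const hTne 0)
    have heq : (fun i => T.sup fun s => (0 : Rmax) + v s i) = a' := by
      funext i
      exact Finset.sup_congr rfl fun s _ => zero_add _
    rwa [heq] at hmem
  set lam' : Fin m → Rmax := fun s => if lam s = 0 then 0 else ((e : ℝ) : Rmax) + lam s
    with hlam'
  have hee : ((e : ℝ) : Rmax) + ((-e : ℝ) : Rmax) = 0 := by
    rw [show (0 : Rmax) = ((0 : ℝ) : Rmax) from rfl]
    exact_mod_cast (by ring : e + -e = 0)
  have hsup' : Finset.univ.sup lam' = 0 := by
    rw [← hunion, Finset.sup_union]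
    have h1 : T.sup lam' = 0 := by
      rw [show T.sup lam' = T.sup (fun _ => (0 : Rmax)) from
        Finset.sup_congr rfl fun s hs => if_pos (Finset.mem_filter.mp hs).2]
      exact Finset.sup_const hTne 0
    have h2 : Tc.sup lam' ≤ 0 := by
      apply Finset.sup_le
      intro s hs
      rw [hlam']
      simp only [if_neg (Finset.mem_filter.mp hs).2]
      calc ((e : ℝ) : Rmax) + lam s ≤ ((e : ℝ) : Rmax) + ((-e : ℝ) : Rmax) :=
            add_le_add_right (hgap s hs) _
        _ = 0 := hee
    rw [h1]
    exact max_eq_left h2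
  have hw' : (fun i => Finset.univ.sup (fun s => lam' s + v s i)) ∈ tropCo Z :=
    mem_tropCo_finset Finset.univ lam' v (fun s _ => hv s) hsup'
  have hweq : (fun i => Finset.univ.sup (fun s => lam' s + v s i))
      = fun i => max (a' i) (((e : ℝ) : Rmax) + b' i) := by
    funext i
    rw [← hunion, Finset.sup_union]
    congr 1
    · apply Finset.sup_congr rfl
      intro s hs
      rw [hlam']
      simp only [if_pos (Finset.mem_filter.mp hs).2, zero_add]
    · rw [hb', Rmax.add_finsetSup]
      apply Finset.sup_congr rfl
      intro s hs
      rw [hlam']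
      simp only [if_neg (Finset.mem_filter.mp hs).2]
      exact add_assoc _ _ _
  rw [hweq] at hw'
  have hza' : z = a' := key1 hrep hz e he (tropCo_subset_C hrep ha'co)
    (tropCo_subset_C hrep hw') hzab'
  obtain ⟨s, hs, hzs⟩ := extreme_sup_point (C_max_mem hrep) hz T hTne v
    (fun s _ => tropCo_subset_C hrep (single_mem_tropCo (hv s))) hza'
  rw [hzs]
  exact hv s

lemma exists_big (c : Rmax) (r : ℝ) : ∃ l : ℝ, ∀ t : ℝ, l ≤ t → c < ((t + r : ℝ) : Rmax) := by
  rcases c with _ | cr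
  · exact ⟨0, fun t _ => WithBot.bot_lt_coe _⟩
  · refine ⟨cr - r + 1, fun t ht => ?_⟩
    exact WithBot.coe_lt_coe.mpr (by linarith)

lemma bound_lemma (q l0 : ℝ) (c d : Rmax)
    (h : ∀ N : ℕ, ∃ t : ℕ, N ≤ t ∧
      (((q + (l0 + t) : ℝ)) : Rmax) ≤ max c (((l0 + t : ℝ) : Rmax) + d)) :
    ((q : ℝ) : Rmax) ≤ d := by
  obtain ⟨cr, hcr⟩ : ∃ cr : ℝ, c ≤ (cr : Rmax) := by
    rcases c with _ | r
    · exact ⟨0, bot_le⟩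
    · exact ⟨r, le_rfl⟩
  obtain ⟨t, ht, hineq⟩ := h (⌈cr - q - l0⌉₊ + 1)
  have htR : cr - q - l0 < (t : ℝ) := by
    calc cr - q - l0 ≤ (⌈cr - q - l0⌉₊ : ℝ) := Nat.le_ceil _
      _ < ((⌈cr - q - l0⌉₊ + 1 : ℕ) : ℝ) := by push_cast; linarith
      _ ≤ (t : ℝ) := by exact_mod_cast ht
  rcases le_max_iff.mp hineq with h1 | h1
  · exfalso
    have h2 : ((q + (l0 + t) : ℝ) : Rmax) ≤ (cr : Rmax) := h1.trans hcr
    have h3 : q + (l0 + t) ≤ cr := by exact_mod_cast h2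
    linarith
  · rcases eq_or_ne d ⊥ with rfl | hd
    · exfalso
      rw [WithBot.add_bot] at h1
      exact WithBot.coe_ne_bot (le_bot_iff.mp h1)
    · obtain ⟨dr, hdr⟩ := WithBot.ne_bot_iff_exists.mp hd
      rw [← hdr] at h1 ⊢
      have h2 : ((l0 + t : ℝ) : Rmax) + (dr : Rmax) = (((l0 + t) + dr : ℝ) : Rmax) := by
        exact_mod_cast rfl
      rw [h2] at h1
      have h3 : q + (l0 + t) ≤ (l0 + t) + dr := WithBot.coe_le_coe.mp h1
      exact WithBot.coe_le_coe.mpr (by linarith)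

-- Part 2
lemma part2 {n : ℕ} {C Z Y : Set (Fin n → Rmax)} (hZ : Z.Finite) (hY : Y.Finite)
    (hrep : C = tropSum (tropCo Z) (tropCone Y))
    {z : Fin n → Rmax}
    (hz : z ∈ recessionCone C ∧ z ≠ (fun _ => (⊥ : Rmax)) ∧
      ∀ u ∈ recessionCone C, ∀ w ∈ recessionCone C,
        z = (fun i => max (u i) (w i)) → z = u ∨ z = w) :
    ∃ lam : Rmax, lam ≠ ⊥ ∧ (fun i => lam + z i) ∈ Y := by
  classical
  obtain ⟨x, hxC, hx⟩ := hz.1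
  set F : Finset (Fin n) := Finset.univ.filter (fun i => z i ≠ ⊥) with hF
  have hFne : F.Nonempty := by
    rcases Function.ne_iff.mp hz.2.1 with ⟨i, hi⟩
    exact ⟨i, Finset.mem_filter.mpr ⟨Finset.mem_univ i, hi⟩⟩
  set M : Fin n → Rmax := fun k => hZ.toFinset.sup (fun u => u k) with hM
  have hMbound : ∀ a ∈ tropCo Z, ∀ k, a k ≤ M k := by
    rintro a ⟨m, lam, w, hw, hlam, rfl⟩ k
    apply Finset.sup_le
    intro s _
    calc lam s + w s k ≤ 0 + w s k :=
          add_le_add_left (hlam ▸ Finset.le_sup (Finset.mem_univ s)) _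
      _ = w s k := zero_add _
      _ ≤ M k := Finset.le_sup (f := fun u => u k) (hZ.mem_toFinset.mpr (hw s))
  have hclaim : ∀ i ∈ F, ∃ v : Fin n → Rmax, v ∈ recessionCone C ∧ (∀ k, v k ≤ z k) ∧
      v i = z i ∧ ∃ (mu : ℝ) (y : Fin n → Rmax), y ∈ Y ∧
        v = fun k => ((mu : ℝ) : Rmax) + y k := by
    intro i hiF
    have hzi : z i ≠ ⊥ := (Finset.mem_filter.mp hiF).2
    obtain ⟨zi, hzi'⟩ := WithBot.ne_bot_iff_exists.mp hzi
    obtain ⟨l1, hl1⟩ := exists_big (x i) zi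
    obtain ⟨l2, hl2⟩ := exists_big (M i) zi
    set l0 : ℝ := max l1 l2 with hl0def
    have hstep : ∀ t : ℕ, ∃ y : Fin n → Rmax, y ∈ hY.toFinset ∧ ∃ yi : ℝ,
        y i = (yi : Rmax) ∧
        ∀ k, ((((l0 + t) + zi - yi : ℝ)) : Rmax) + y k ≤
          max (x k) (((l0 + t : ℝ) : Rmax) + z k) := by
      intro t
      have htnn : (0 : ℝ) ≤ (t : ℕ) := Nat.cast_nonneg t
      have hxi : x i < ((((l0 + t) + zi : ℝ)) : Rmax) :=
        hl1 (l0 + t) (by simp only [hl0def]; linarith [le_max_left l1 l2])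
      have hMi : M i < ((((l0 + t) + zi : ℝ)) : Rmax) :=
        hl2 (l0 + t) (by simp only [hl0def]; linarith [le_max_right l1 l2])
      have hmem := hx (((l0 + t : ℝ) : Rmax))
      rw [hrep] at hmem
      obtain ⟨a, ha, b, hb, heq⟩ := hmem
      have hcast : ((l0 + t : ℝ) : Rmax) + z i = ((((l0 + t) + zi : ℝ)) : Rmax) := by
        rw [← hzi']
        exact_mod_cast rfl
      have hcoord : max (a i) (b i) = ((((l0 + t) + zi : ℝ)) : Rmax) := by
        rw [← congrFun heq i, hcast]
        exact max_eq_right hxi.le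
      have halt : a i < ((((l0 + t) + zi : ℝ)) : Rmax) := lt_of_le_of_lt (hMbound a ha i) hMi
      have hbi : b i = ((((l0 + t) + zi : ℝ)) : Rmax) := by
        rcases le_total (b i) (a i) with hba | hab
        · exact absurd (max_eq_left hba ▸ hcoord) halt.ne
        · rw [max_eq_right hab] at hcoord; exact hcoord
      obtain ⟨mb, mu, yy, hyy, rfl⟩ := hb
      have hbi' : Finset.univ.sup (fun s => mu s + yy s i) = ((((l0 + t) + zi : ℝ)) : Rmax) := hbi
      have hne : (Finset.univ : Finset (Fin mb)).Nonempty := by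
        by_contra hc
        rw [Finset.not_nonempty_iff_eq_empty] at hc
        rw [hc, Finset.sup_empty] at hbi'
        exact WithBot.coe_ne_bot hbi'.symm
      obtain ⟨r, _, hr⟩ := Finset.exists_mem_eq_sup Finset.univ hne (fun s => mu s + yy s i)
      have hri : mu r + yy r i = ((((l0 + t) + zi : ℝ)) : Rmax) := by rw [← hr]; exact hbi'
      have hmur : mu r ≠ ⊥ := by
        intro hbot
        rw [hbot, WithBot.bot_add] at hri
        exact WithBot.coe_ne_bot hri.symm
      have hyri : yy r i ≠ ⊥ := by
        intro hbot
        rw [hbot, WithBot.add_bot] at hri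
        exact WithBot.coe_ne_bot hri.symm
      obtain ⟨c, hc⟩ := WithBot.ne_bot_iff_exists.mp hmur
      obtain ⟨yi, hyi⟩ := WithBot.ne_bot_iff_exists.mp hyri
      have hcyi : c + yi = (l0 + t) + zi := by
        rw [← hc, ← hyi] at hri
        exact_mod_cast hri
      have hcval : ((((l0 + t) + zi - yi : ℝ)) : Rmax) = (c : Rmax) :=
        WithBot.coe_inj.mpr (by linarith)
      refine ⟨yy r, hY.mem_toFinset.mpr (hyy r), yi, hyi.symm, fun k => ?_⟩
      rw [hcval, hc]
      calc mu r + yy r k ≤ Finset.univ.sup (fun s => mu s + yy s k) :=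
            Finset.le_sup (f := fun s => mu s + yy s k) (Finset.mem_univ r)
        _ ≤ max (a k) (Finset.univ.sup (fun s => mu s + yy s k)) := le_max_right _ _
        _ = max (x k) (((l0 + t : ℝ) : Rmax) + z k) := (congrFun heq k).symm
    choose g hgmem yi hyieq hineq using hstep
    have : Finite {y // y ∈ hY.toFinset} := inferInstance
    obtain ⟨y0, hy0⟩ := Finite.exists_infinite_fiber (fun t => (⟨g t, hgmem t⟩ : {y // y ∈ hY.toFinset}))
    have hs : ((fun t => (⟨g t, hgmem t⟩ : {y // y ∈ hY.toFinset})) ⁻¹' {y0}).Infinite :=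
      Set.infinite_coe_iff.mp hy0
    obtain ⟨t0, ht0⟩ := hs.nonempty
    have hgt0 : g t0 = y0.1 := by
      have h' : (⟨g t0, hgmem t0⟩ : {y // y ∈ hY.toFinset}) = y0 := ht0
      exact congrArg Subtype.val h' 
    set y : Fin n → Rmax := y0.1 with hy
    have hyY : y ∈ Y := hY.mem_toFinset.mp y0.2
    set Yi : ℝ := yi t0 with hYi
    have hyiI : y i = (Yi : Rmax) := by rw [← hgt0]; exact hyieq t0
    have hyicons : ∀ t ∈ (fun t => (⟨g t, hgmem t⟩ : {y // y ∈ hY.toFinset})) ⁻¹' {y0},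
        yi t = Yi := by
      intro t ht
      have hgt : g t = y := by
        have h' : (⟨g t, hgmem t⟩ : {y // y ∈ hY.toFinset}) = y0 := ht
        exact congrArg Subtype.val h' 
      have h1 : ((yi t : ℝ) : Rmax) = ((Yi : ℝ) : Rmax) := by
        rw [← hyieq t, hgt, hyiI]
      exact_mod_cast h1
    have hkey : ∀ k, ((zi - Yi : ℝ) : Rmax) + y k ≤ z k := by
      intro k
      rcases eq_or_ne (y k) ⊥ with hyk | hyk
      · rw [hyk, WithBot.add_bot]; exact bot_le
      · obtain ⟨yk, hyk'⟩ := WithBot.ne_bot_iff_exists.mp hyk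
        rw [← hyk']
        have hcast : ((zi - Yi : ℝ) : Rmax) + (yk : Rmax) = ((zi - Yi + yk : ℝ) : Rmax) := by
          exact_mod_cast rfl
        rw [hcast]
        apply bound_lemma (zi - Yi + yk) l0 (x k) (z k)
        intro N
        obtain ⟨t, hts, htN⟩ := hs.exists_gt N
        refine ⟨t, htN.le, ?_⟩
        have hgt : g t = y := by
          have h' : (⟨g t, hgmem t⟩ : {y // y ∈ hY.toFinset}) = y0 := hts
          exact congrArg Subtype.val h' 
        have h1 := hineq t k
        rw [hgt, hyicons t hts, ← hyk'] at h1
        have h2 : ((((l0 + t) + zi - Yi : ℝ)) : Rmax) + (yk : Rmax)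
            = (((zi - Yi + yk) + (l0 + t) : ℝ) : Rmax) := by
          rw [← WithBot.coe_add]
          exact WithBot.coe_inj.mpr (by ring)
        rw [h2] at h1
        exact h1
    refine ⟨fun k => ((zi - Yi : ℝ) : Rmax) + y k,
      tropCone_subset_recession hrep hxC (single_mem_tropCone hyY _), hkey, ?_,
      zi - Yi, y, hyY, rfl⟩
    show ((zi - Yi : ℝ) : Rmax) + y i = z i
    rw [hyiI, ← hzi']
    rw [← WithBot.coe_add]
    exact WithBot.coe_inj.mpr (by ring)
  choose! v hW hle hagree mu yv hyvY hform using hclaim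
  have hzsup : z = fun k => F.sup (fun i => v i k) := by
    funext k
    apply le_antisymm
    · rcases eq_or_ne (z k) ⊥ with h | h
      · rw [h]; exact bot_le
      · have hkF : k ∈ F := Finset.mem_filter.mpr ⟨Finset.mem_univ k, h⟩
        rw [← hagree k hkF]
        exact Finset.le_sup (f := fun i => v i k) hkF
    · exact Finset.sup_le fun i hi => hle i hi k
  obtain ⟨i, hiF, hzi⟩ := extreme_sup_vector (recession_max_mem hrep) hz.2.2 F hFne v
    (fun i hi => hW i hi) hzsup
  refine ⟨((-(mu i) : ℝ) : Rmax), WithBot.coe_ne_bot, ?_⟩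
  have hform' := hform i hiF
  have hfin : (fun k => ((-(mu i) : ℝ) : Rmax) + z k) = yv i := by
    funext k
    rw [hzi, hform']
    show ((-(mu i) : ℝ) : Rmax) + (((mu i : ℝ) : Rmax) + yv i k) = yv i k
    rw [← add_assoc]
    have h0 : ((-(mu i) : ℝ) : Rmax) + ((mu i : ℝ) : Rmax) = 0 := by
      rw [← WithBot.coe_add, show -(mu i) + mu i = (0 : ℝ) by ring]
      rfl
    rw [h0, zero_add]
  rw [hfin]
  exact hyvY i hiF


/-- extreme points of `C` belong to `Z`, and extreme vectors of the
recession cone of `C` have a non-zero scalar multiple in `Y`. -/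
theorem stmt_3 {n : ℕ} (C Z Y : Set (Fin n → Rmax)) (hC : IsPolyhedron C)
    (hZ : Z.Finite) (hY : Y.Finite)
    (hrep : C = tropSum (tropCo Z) (tropCone Y)) :
    (∀ z : Fin n → Rmax, IsExtremePoint C z → z ∈ Z) ∧
    (∀ z : Fin n → Rmax, IsExtremeVector (recessionCone C) z →
      ∃ lam : Rmax, lam ≠ ⊥ ∧ (fun i => lam + z i) ∈ Y) := by
  constructor
  · intro z hz
    exact part1 hrep hz
  · intro z hz
    exact part2 hZ hY hrep hz
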